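/- Let A and à be real symmetric N×N matrices with eigenvalues λ_1 ≥ λ_2 ≥ … ≥ λ_N and λ̃_1 ≥ λ̃_2 ≥ … ≥ λ̃_N respectively, and let V_k ∈ ℝ^{N×k} and Ṽ_k ∈ ℝ^{N×k} have orthonormal columns that are eigenvectors of A and à corresponding to λ_1,…,λ_k and λ̃_1,…,λ̃_k. For each i ∈ {1,…,N} let v(i) and ṽ(i) denote the i-th rows of V_k and Ṽ_k. If there is α > 0 such that λ_k − λ_{k+1} ≥ α and λ_k ≥ α, then there exists an orthogonal matrix Q ∈ ℝ^{k×k} such that for every i ∈ {1,…,N}, ‖ṽ(i) − v(i) Q‖_2 ≤ (1 + √2)·(1/α)·‖A − Ã‖_F. -/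

import Mathlib

open Matrix

noncomputable def frobNorm {m n : ℕ} (M : Matrix (Fin m) (Fin n) ℝ) : ℝ :=
  Real.sqrt (∑ i, ∑ j, (M i j) ^ 2)

noncomputable def eucNorm {d : ℕ} (v : Fin d → ℝ) : ℝ :=
  Real.sqrt (∑ j, v j ^ 2)





noncomputable def frobSq {m n : ℕ} (M : Matrix (Fin m) (Fin n) ℝ) : ℝ :=
  ∑ i, ∑ j, (M i j) ^ 2

lemma frobSq_nonneg {m n : ℕ} (M : Matrix (Fin m) (Fin n) ℝ) : 0 ≤ frobSq M :=
  Finset.sum_nonneg fun _ _ => Finset.sum_nonneg fun _ _ => sq_nonneg _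

lemma frobSq_eq_trace {m n : ℕ} (M : Matrix (Fin m) (Fin n) ℝ) :
    frobSq M = (Mᵀ * M).trace := by
  unfold frobSq Matrix.trace
  rw [Finset.sum_comm]
  refine Finset.sum_congr rfl fun j _ => ?_
  simp [Matrix.mul_apply, Matrix.diag, pow_two]

lemma frobSq_transpose {m n : ℕ} (M : Matrix (Fin m) (Fin n) ℝ) :
    frobSq Mᵀ = frobSq M := by
  unfold frobSq
  rw [Finset.sum_comm]
  rfl

lemma frobSq_col_sum {m n : ℕ} (M : Matrix (Fin m) (Fin n) ℝ) :
    frobSq M = ∑ j, (fun i => M i j) ⬝ᵥ (fun i => M i j) := by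
  unfold frobSq
  rw [Finset.sum_comm]
  refine Finset.sum_congr rfl fun j _ => ?_
  simp [dotProduct, pow_two]

/-- splitting of a Frobenius square along a right projection -/
lemma frobSq_split_right {m n : ℕ} (X : Matrix (Fin m) (Fin n) ℝ)
    (Pp : Matrix (Fin n) (Fin n) ℝ) (hs : Ppᵀ = Pp) (hi : Pp * Pp = Pp) :
    frobSq X = frobSq (X * Pp) + frobSq (X - X * Pp) := by
  have h1 : frobSq (X * Pp) = (Xᵀ * X * Pp).trace := by
    rw [frobSq_eq_trace, Matrix.transpose_mul, hs]
    rw [show Pp * Xᵀ * (X * Pp) = Pp * (Xᵀ * X * Pp) by simp only [Matrix.mul_assoc]]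
    rw [Matrix.trace_mul_comm Pp (Xᵀ * X * Pp)]
    rw [show Xᵀ * X * Pp * Pp = Xᵀ * X * (Pp * Pp) by simp only [Matrix.mul_assoc], hi]
  have h2 : frobSq (X - X * Pp) = (Xᵀ * X).trace - (Xᵀ * X * Pp).trace := by
    rw [frobSq_eq_trace]
    have expand : (X - X * Pp)ᵀ * (X - X * Pp)
        = Xᵀ * X - Xᵀ * X * Pp - (Pp * (Xᵀ * X) - Pp * (Xᵀ * X * Pp)) := by
      rw [Matrix.transpose_sub, Matrix.transpose_mul, hs]
      simp only [Matrix.sub_mul, Matrix.mul_sub, Matrix.mul_assoc]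
      abel
    rw [expand]
    rw [Matrix.trace_sub, Matrix.trace_sub, Matrix.trace_sub]
    rw [Matrix.trace_mul_comm Pp (Xᵀ * X), Matrix.trace_mul_comm Pp (Xᵀ * X * Pp)]
    rw [show Xᵀ * X * Pp * Pp = Xᵀ * X * (Pp * Pp) by simp only [Matrix.mul_assoc], hi]
    ring
  rw [h1, h2, frobSq_eq_trace]
  ring

lemma frobSq_mul_right_proj_le {m n : ℕ} (X : Matrix (Fin m) (Fin n) ℝ)
    (Pp : Matrix (Fin n) (Fin n) ℝ) (hs : Ppᵀ = Pp) (hi : Pp * Pp = Pp) :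
    frobSq (X * Pp) ≤ frobSq X := by
  have := frobSq_split_right X Pp hs hi
  have h2 := frobSq_nonneg (X - X * Pp)
  linarith

lemma frobSq_split_left {m n : ℕ} (X : Matrix (Fin m) (Fin n) ℝ)
    (Pp : Matrix (Fin m) (Fin m) ℝ) (hs : Ppᵀ = Pp) (hi : Pp * Pp = Pp) :
    frobSq X = frobSq (Pp * X) + frobSq (X - Pp * X) := by
  have := frobSq_split_right Xᵀ Pp hs hi
  rw [frobSq_transpose] at this
  rw [this]
  congr 1
  · rw [← frobSq_transpose (Pp * X), Matrix.transpose_mul, hs]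
  · rw [← frobSq_transpose (X - Pp * X), Matrix.transpose_sub, Matrix.transpose_mul, hs]

/-- `‖X V‖_F = ‖X (V Vᵀ)‖_F` when `Vᵀ V = 1`. -/
lemma frobSq_mul_isometry {m N k : ℕ} (X : Matrix (Fin m) (Fin N) ℝ)
    (V : Matrix (Fin N) (Fin k) ℝ) (hV : Vᵀ * V = 1) :
    frobSq (X * V) = frobSq (X * (V * Vᵀ)) := by
  rw [frobSq_eq_trace, frobSq_eq_trace]
  rw [Matrix.transpose_mul, Matrix.transpose_mul, Matrix.transpose_mul, Matrix.transpose_transpose]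
  rw [show Vᵀ * Xᵀ * (X * V) = (Vᵀ * (Xᵀ * X)) * V by simp only [Matrix.mul_assoc]]
  rw [Matrix.trace_mul_comm]
  rw [show V * (Vᵀ * (Xᵀ * X)) = (V * Vᵀ) * (Xᵀ * X) by simp only [Matrix.mul_assoc]]
  rw [show V * Vᵀ * Xᵀ * (X * (V * Vᵀ)) = ((V * Vᵀ) * (Xᵀ * X)) * (V * Vᵀ) by
    simp only [Matrix.mul_assoc]]
  rw [Matrix.trace_mul_comm (V * Vᵀ * (Xᵀ * X)) (V * Vᵀ)]
  rw [show V * Vᵀ * (V * Vᵀ * (Xᵀ * X)) = (V * ((Vᵀ * V) * Vᵀ)) * (Xᵀ * X) by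
    simp only [Matrix.mul_assoc]]
  rw [hV, Matrix.one_mul]


lemma sum_subtype_eq_full {α : Type*} [Fintype α] (p : α → Prop) [DecidablePred p]
    (f : α → ℝ) (h : ∀ x, ¬ p x → f x = 0) :
    ∑ x : {x // p x}, f x.1 = ∑ x, f x := by
  classical
  rw [← Finset.sum_subtype (Finset.univ.filter p) (fun x => by simp) f]
  exact Finset.sum_filter_of_ne (fun x _ hx => by by_contra hp; exact hx (h x hp))

lemma dot_mulVec_left {m n : ℕ} (B : Matrix (Fin m) (Fin n) ℝ) (a : Fin n → ℝ) (b : Fin m → ℝ) :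
    (B *ᵥ a) ⬝ᵥ b = a ⬝ᵥ (Bᵀ *ᵥ b) := by
  rw [dotProduct_comm, dotProduct_mulVec, dotProduct_comm]
  congr 1
  exact (Matrix.mulVec_transpose B b).symm

lemma vanish {N k : ℕ} (hkN : k < N) (nu : Fin N → ℝ) (hnu : Antitone nu)
    (T : Matrix (Fin N) (Fin k) ℝ) (hTT : Tᵀ * T = 1)
    (hsupp : ∀ m j, T m j ≠ 0 → nu m = nu (Fin.castLE hkN.le j))
    (ζ : Fin N → ℝ) (hker : ∀ j : Fin k, (fun m => T m j) ⬝ᵥ ζ = 0) :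
    ∀ m : Fin N, nu ⟨k, hkN⟩ < nu m → ζ m = 0 := by
  classical
  set c := nu ⟨k, hkN⟩ with hc
  have hlt : ∀ m : Fin N, c < nu m → m.1 < k := by
    intro m hm
    by_contra h
    push_neg at h
    have hle : (⟨k, hkN⟩ : Fin N) ≤ m := h
    exact absurd (hnu hle) (not_le.mpr hm)
  have casteq : ∀ (m : Fin N) (hm : c < nu m), Fin.castLE hkN.le ⟨m.1, hlt m hm⟩ = m := by
    intro m hm; apply Fin.ext; rfl
  let e : {m : Fin N // c < nu m} ≃ {j : Fin k // c < nu (Fin.castLE hkN.le j)} :=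
    { toFun := fun m => ⟨⟨m.1.1, hlt m.1 m.2⟩, by rw [casteq m.1 m.2]; exact m.2⟩
      invFun := fun j => ⟨Fin.castLE hkN.le j.1, j.2⟩
      left_inv := fun m => by apply Subtype.ext; apply Fin.ext; rfl
      right_inv := fun j => by apply Subtype.ext; apply Fin.ext; rfl }
  let Csq : Matrix {m : Fin N // c < nu m} {m : Fin N // c < nu m} ℝ := fun a b => T a.1 (e b).1
  -- helper: column support
  have colsupp : ∀ (b : {j : Fin k // c < nu (Fin.castLE hkN.le j)}) (m : Fin N), ¬ (c < nu m) → T m b.1 = 0 := by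
    intro b m hm
    by_contra hT
    exact hm (by rw [hsupp m b.1 hT]; exact b.2)
  have claim1 : Csqᵀ * Csq = 1 := by
    ext a b
    simp only [Matrix.mul_apply, Matrix.transpose_apply]; simp only [Csq]
    have hfull : ∑ x : {m : Fin N // c < nu m}, T x.1 (e a).1 * T x.1 (e b).1
        = ∑ m : Fin N, T m (e a).1 * T m (e b).1 := by
      apply sum_subtype_eq_full (fun m => c < nu m) (fun m => T m (e a).1 * T m (e b).1)
      intro m hm
      rw [colsupp (e a) m hm, zero_mul]
    rw [hfull]
    have h1 : (Tᵀ * T) (e a).1 (e b).1 = ∑ m : Fin N, T m (e a).1 * T m (e b).1 := by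
      simp [Matrix.mul_apply, Matrix.transpose_apply]
    rw [← h1, hTT]
    by_cases hab : a = b
    · subst hab; simp [Matrix.one_apply]
    · have : (e a).1 ≠ (e b).1 := by
        intro hcon
        exact hab (e.injective (Subtype.ext hcon))
      simp [Matrix.one_apply, this, hab]
  have hC2 : Csq * Csqᵀ = 1 := mul_eq_one_comm.mp claim1
  set ζS : {m : Fin N // c < nu m} → ℝ := fun a => ζ a.1 with hζS
  have hker2 : Csqᵀ *ᵥ ζS = 0 := by
    funext b
    simp only [Matrix.mulVec, Matrix.transpose_apply, dotProduct, Pi.zero_apply]; simp only [Csq]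
    have hfull : ∑ x : {m : Fin N // c < nu m}, T x.1 (e b).1 * ζ x.1
        = ∑ m : Fin N, T m (e b).1 * ζ m := by
      apply sum_subtype_eq_full (fun m => c < nu m) (fun m => T m (e b).1 * ζ m)
      intro m hm
      rw [colsupp (e b) m hm, zero_mul]
    rw [hfull]
    exact hker (e b).1
  have hzero : ζS = 0 := by
    have h1 : ζS = (Csq * Csqᵀ) *ᵥ ζS := by rw [hC2, Matrix.one_mulVec]
    rw [← Matrix.mulVec_mulVec, hker2, Matrix.mulVec_zero] at h1
    exact h1
  intro m hm
  exact congrFun hzero ⟨m, hm⟩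


lemma est {N k : ℕ} (hkN : k < N) (B Ub : Matrix (Fin N) (Fin N) ℝ) (nu : Fin N → ℝ)
    (hnu : Antitone nu) (hUorth : Ub * Ubᵀ = 1)
    (hBdiag : B = Ub * Matrix.diagonal nu * Ubᵀ)
    (W : Matrix (Fin N) (Fin k) ℝ) (hW : Wᵀ * W = 1)
    (hWcols : ∀ j : Fin k,
      B.mulVec (fun i => W i j) = nu (Fin.castLE hkN.le j) • (fun i => W i j))
    (z : Fin N → ℝ) (hz : ∀ j : Fin k, (fun i => W i j) ⬝ᵥ z = 0)
    (μ d : ℝ) (hd : 0 ≤ d) (hμ : nu ⟨k, hkN⟩ + d ≤ μ) :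
    d ^ 2 * (z ⬝ᵥ z) ≤ (B *ᵥ z - μ • z) ⬝ᵥ (B *ᵥ z - μ • z) := by
  classical
  have hUU : Ubᵀ * Ub = 1 := mul_eq_one_comm.mp hUorth
  -- inner products preserved by Ubᵀ
  have pres : ∀ u v : Fin N → ℝ, (Ubᵀ *ᵥ u) ⬝ᵥ (Ubᵀ *ᵥ v) = u ⬝ᵥ v := by
    intro u v
    rw [dot_mulVec_left, Matrix.transpose_transpose, Matrix.mulVec_mulVec, hUorth,
      Matrix.one_mulVec]
  have hUB : Ubᵀ * B = Matrix.diagonal nu * Ubᵀ := by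
    rw [hBdiag, ← Matrix.mul_assoc, ← Matrix.mul_assoc, hUU, Matrix.one_mul]
  set ζ : Fin N → ℝ := Ubᵀ *ᵥ z with hζ
  set T : Matrix (Fin N) (Fin k) ℝ := Ubᵀ * W with hT
  have hTT : Tᵀ * T = 1 := by
    rw [hT, Matrix.transpose_mul, Matrix.transpose_transpose, Matrix.mul_assoc,
      ← Matrix.mul_assoc Ub Ubᵀ W, hUorth, Matrix.one_mul, hW]
  have hcolT : ∀ j : Fin k, (fun m => T m j) = Ubᵀ *ᵥ (fun i => W i j) := by
    intro j; funext m
    simp [hT, Matrix.mul_apply, Matrix.mulVec, dotProduct]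
  have hsupp : ∀ m j, T m j ≠ 0 → nu m = nu (Fin.castLE hkN.le j) := by
    intro m j hne
    have h1 : Ubᵀ *ᵥ (B *ᵥ (fun i => W i j))
        = fun m' => nu m' * T m' j := by
      rw [Matrix.mulVec_mulVec, hUB, ← Matrix.mulVec_mulVec]
      funext m'
      rw [Matrix.mulVec_diagonal]
      congr 1
    have h2 : Ubᵀ *ᵥ (B *ᵥ (fun i => W i j))
        = fun m' => nu (Fin.castLE hkN.le j) * T m' j := by
      rw [hWcols j, Matrix.mulVec_smul]
      funext m'
      simp only [Pi.smul_apply, smul_eq_mul]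
      congr 1
    have := congrFun (h1.symm.trans h2) m
    rw [mul_eq_mul_right_iff] at this
    rcases this with h | h
    · exact h
    · exact absurd h hne
  have hker : ∀ j : Fin k, (fun m => T m j) ⬝ᵥ ζ = 0 := by
    intro j
    rw [hcolT j, hζ, pres]
    exact hz j
  have hvan := vanish hkN nu hnu T hTT hsupp ζ hker
  -- coordinates of the residual vector
  have hη : Ubᵀ *ᵥ (B *ᵥ z - μ • z) = fun m => (nu m - μ) * ζ m := by
    funext m
    have hlin : (Ubᵀ *ᵥ (B *ᵥ z - μ • z)) m
        = (Ubᵀ *ᵥ (B *ᵥ z)) m - μ * (Ubᵀ *ᵥ z) m := by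
      simp [Matrix.mulVec, dotProduct, mul_sub, Finset.sum_sub_distrib,
        Finset.mul_sum, mul_comm, mul_left_comm]
    rw [hlin]
    have : Ubᵀ *ᵥ (B *ᵥ z) = fun m' => nu m' * ζ m' := by
      rw [Matrix.mulVec_mulVec, hUB, ← Matrix.mulVec_mulVec]
      funext m'
      rw [Matrix.mulVec_diagonal]
    rw [this]
    ring
  have hy : (B *ᵥ z - μ • z) ⬝ᵥ (B *ᵥ z - μ • z)
      = ∑ m, (nu m - μ) ^ 2 * (ζ m) ^ 2 := by
    rw [← pres, hη]
    simp [dotProduct]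
    refine Finset.sum_congr rfl fun m _ => by ring
  have hzdot : z ⬝ᵥ z = ∑ m, (ζ m) ^ 2 := by
    rw [← pres z z]
    simp [dotProduct, pow_two]
    rfl
  rw [hy, hzdot, Finset.mul_sum]
  refine Finset.sum_le_sum fun m _ => ?_
  by_cases hm : nu ⟨k, hkN⟩ < nu m
  · rw [hvan m hm]; simp
  · push_neg at hm
    have h1 : d ≤ μ - nu m := by linarith
    have h2 : d ^ 2 ≤ (μ - nu m) ^ 2 := by nlinarith
    have h3 : (nu m - μ) ^ 2 = (μ - nu m) ^ 2 := by ring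
    rw [h3]
    exact mul_le_mul_of_nonneg_right h2 (sq_nonneg _)


lemma procrustes {k : ℕ} (M : Matrix (Fin k) (Fin k) ℝ)
    (hM : ∀ x : Fin k → ℝ, (M *ᵥ x) ⬝ᵥ (M *ᵥ x) ≤ x ⬝ᵥ x) :
    ∃ Q : Matrix (Fin k) (Fin k) ℝ, Qᵀ * Q = 1 ∧ (Mᵀ * M).trace ≤ (Qᵀ * M).trace := by
  classical
  set H : Matrix (Fin k) (Fin k) ℝ := Mᵀ * M with hH
  have hHerm : H.IsHermitian := by simpa [Matrix.conjTranspose_eq_transpose_of_trivial] using Matrix.isHermitian_conjTranspose_mul_self M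
  set Rm : Matrix (Fin k) (Fin k) ℝ := (hHerm.eigenvectorUnitary : Matrix (Fin k) (Fin k) ℝ)
    with hRm
  set sig : Fin k → ℝ := hHerm.eigenvalues with hsig
  have hstar : star Rm = Rmᵀ := by
    ext i j
    simp [Matrix.star_eq_conjTranspose, Matrix.conjTranspose_apply]
  have hR1 : Rmᵀ * Rm = 1 := by
    rw [← hstar]
    exact (Matrix.mem_unitaryGroup_iff'.mp hHerm.eigenvectorUnitary.2)
  have hR2 : Rm * Rmᵀ = 1 := mul_eq_one_comm.mp hR1
  have hspec : H = Rm * Matrix.diagonal sig * Rmᵀ := by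
    have := hHerm.spectral_theorem
    rw [Unitary.conjStarAlgAut_apply] at this
    rw [hstar] at this
    rw [this]
    rfl
  -- columns of M * Rm
  set Nc : Matrix (Fin k) (Fin k) ℝ := M * Rm with hNc
  have hdiag : Ncᵀ * Nc = Matrix.diagonal sig := by
    rw [hNc, Matrix.transpose_mul]
    rw [show Rmᵀ * Mᵀ * (M * Rm) = Rmᵀ * ((Mᵀ * M) * Rm) by simp only [Matrix.mul_assoc]]
    rw [← hH, hspec]
    rw [show Rmᵀ * (Rm * Matrix.diagonal sig * Rmᵀ * Rm)
        = (Rmᵀ * Rm) * Matrix.diagonal sig * (Rmᵀ * Rm) by simp only [Matrix.mul_assoc]]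
    rw [hR1, Matrix.one_mul, Matrix.mul_one]
  have hNdot : ∀ i j, (fun a => Nc a i) ⬝ᵥ (fun a => Nc a j)
      = if i = j then sig i else 0 := by
    intro i j
    have h1 : (Ncᵀ * Nc) i j = (fun a => Nc a i) ⬝ᵥ (fun a => Nc a j) := by
      simp [Matrix.mul_apply, dotProduct]
    rw [← h1, hdiag, Matrix.diagonal_apply]
  have hsig0 : ∀ i, 0 ≤ sig i := by
    intro i
    have := hNdot i i
    rw [if_pos rfl] at this
    rw [← this]
    exact Finset.sum_nonneg fun a _ => mul_self_nonneg _
  have hsig1 : ∀ i, sig i ≤ 1 := by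
    intro i
    have hcol : (fun a => Nc a i) = M *ᵥ (fun a => Rm a i) := by
      funext a
      simp [hNc, Matrix.mul_apply, Matrix.mulVec, dotProduct]
    have h2 := hM (fun a => Rm a i)
    rw [← hcol] at h2
    have h3 : (fun a => Rm a i) ⬝ᵥ (fun a => Rm a i) = 1 := by
      have : (Rmᵀ * Rm) i i = (fun a => Rm a i) ⬝ᵥ (fun a => Rm a i) := by
        simp [Matrix.mul_apply, dotProduct]
      rw [← this, hR1, Matrix.one_apply_eq]
    have h4 := hNdot i i
    rw [if_pos rfl] at h4
    rw [h4] at h2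
    rw [h3] at h2
    exact h2
  -- build orthonormal family
  set vfun : Fin k → (Fin k → ℝ) := fun i => fun a => (Real.sqrt (sig i))⁻¹ * Nc a i with hvfun
  set v : Fin k → EuclideanSpace ℝ (Fin k) :=
    fun i => (WithLp.equiv 2 (Fin k → ℝ)).symm (vfun i) with hv
  set J : Set (Fin k) := {i | sig i ≠ 0} with hJ
  have hinner : ∀ i j : Fin k, (inner ℝ (v i) (v j) : ℝ)
      = (Real.sqrt (sig i))⁻¹ * (Real.sqrt (sig j))⁻¹ * (if i = j then sig i else 0) := by
    intro i j
    rw [PiLp.inner_apply]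
    have := hNdot i j
    simp only [RCLike.inner_apply, conj_trivial, hv, WithLp.equiv_symm_apply, PiLp.toLp_apply, hvfun]
    rw [← this]
    simp [dotProduct, Finset.mul_sum]
    refine Finset.sum_congr rfl fun a _ => by ring
  have horth : Orthonormal ℝ (J.restrict v) := by
    rw [orthonormal_iff_ite]
    intro i j
    have hi : sig i.1 ≠ 0 := i.2
    rw [show J.restrict v i = v i.1 from rfl, show J.restrict v j = v j.1 from rfl,
      hinner i.1 j.1]
    by_cases hij : i = j
    · subst hij
      simp only [if_pos rfl]
      have hpos : 0 < sig i.1 := lt_of_le_of_ne (hsig0 i.1) (Ne.symm hi)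
      have hs : Real.sqrt (sig i.1) ≠ 0 := by
        positivity
      field_simp
      simp [Real.sq_sqrt hpos.le]
    · have : (i : Fin k) ≠ (j : Fin k) := fun hc => hij (Subtype.ext hc)
      simp [this, hij]
  obtain ⟨b, hb⟩ := horth.exists_orthonormalBasis_extension_of_card_eq
    (by simp [finrank_euclideanSpace])
  set u : Fin k → (Fin k → ℝ) := fun i => (WithLp.equiv 2 (Fin k → ℝ)) (b i) with hu
  have hu_orth : ∀ i j, u i ⬝ᵥ u j = if i = j then (1:ℝ) else 0 := by
    intro i j
    have := (orthonormal_iff_ite (𝕜 := ℝ)).mp b.orthonormal i j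
    rw [PiLp.inner_apply] at this
    simp only [RCLike.inner_apply, conj_trivial] at this
    rw [← this]
    exact Finset.sum_congr rfl fun a _ => mul_comm _ _
  have hub : ∀ i, sig i ≠ 0 → u i = vfun i := by
    intro i hi
    have h5 : b i = v i := hb i hi
    calc u i = (WithLp.equiv 2 (Fin k → ℝ)) (b i) := rfl
      _ = (WithLp.equiv 2 (Fin k → ℝ)) ((WithLp.equiv 2 (Fin k → ℝ)).symm (vfun i)) := by
          rw [h5]
      _ = vfun i := (WithLp.equiv 2 (Fin k → ℝ)).apply_symm_apply (vfun i)
  set Q0 : Matrix (Fin k) (Fin k) ℝ := Matrix.of (fun a i => u i a) with hQ0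
  have hQ0orth : Q0ᵀ * Q0 = 1 := by
    ext i j
    simp only [Matrix.mul_apply, Matrix.transpose_apply, hQ0, Matrix.of_apply]
    rw [show ∑ a, u i a * u j a = u i ⬝ᵥ u j from rfl, hu_orth i j, Matrix.one_apply]
  refine ⟨Q0 * Rmᵀ, ?_, ?_⟩
  · rw [Matrix.transpose_mul, Matrix.transpose_transpose]
    rw [show Rm * Q0ᵀ * (Q0 * Rmᵀ) = Rm * ((Q0ᵀ * Q0) * Rmᵀ) by simp only [Matrix.mul_assoc]]
    rw [hQ0orth, Matrix.one_mul, hR2]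
  · -- trace identities
    have htr1 : ((Q0 * Rmᵀ)ᵀ * M).trace = (Q0ᵀ * Nc).trace := by
      rw [Matrix.transpose_mul, Matrix.transpose_transpose, Matrix.mul_assoc,
        Matrix.trace_mul_comm Rm (Q0ᵀ * M), Matrix.mul_assoc, ← hNc]
    have htr2 : (Mᵀ * M).trace = ∑ i, sig i := by
      rw [← hH, hspec, Matrix.trace_mul_comm (Rm * Matrix.diagonal sig) Rmᵀ,
        ← Matrix.mul_assoc, hR1, Matrix.one_mul, Matrix.trace_diagonal]
    rw [htr1, htr2]
    have htr3 : (Q0ᵀ * Nc).trace = ∑ i, (u i) ⬝ᵥ (fun a => Nc a i) := by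
      unfold Matrix.trace
      refine Finset.sum_congr rfl fun i _ => ?_
      simp [Matrix.mul_apply, Matrix.diag, dotProduct, hQ0]
    rw [htr3]
    refine Finset.sum_le_sum fun i _ => ?_
    by_cases hi : sig i = 0
    · have hzero : (fun a => Nc a i) = 0 := by
        have h4 := hNdot i i
        rw [if_pos rfl, hi] at h4
        funext a
        have := (Finset.sum_eq_zero_iff_of_nonneg
          (fun a _ => mul_self_nonneg (Nc a i))).mp h4 a (Finset.mem_univ a)
        simpa [mul_self_eq_zero] using this
      rw [hzero, hi]
      simp [dotProduct]
    · rw [hub i hi]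
      have h4 := hNdot i i
      rw [if_pos rfl] at h4
      have hdot : vfun i ⬝ᵥ (fun a => Nc a i) = (Real.sqrt (sig i))⁻¹ * sig i := by
        simp only [hvfun, dotProduct, mul_assoc]
        rw [← Finset.mul_sum]
        congr 1
      rw [hdot]
      have hpos : 0 < sig i := lt_of_le_of_ne (hsig0 i) (Ne.symm hi)
      have hsq : Real.sqrt (sig i) * Real.sqrt (sig i) = sig i := Real.mul_self_sqrt hpos.le
      have hsp : 0 < Real.sqrt (sig i) := Real.sqrt_pos.mpr hpos
      rw [inv_mul_eq_div, Real.div_sqrt]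
      nlinarith [hsig1 i]

lemma frobSq_neg {m n : ℕ} (M : Matrix (Fin m) (Fin n) ℝ) : frobSq (-M) = frobSq M := by
  unfold frobSq
  simp

set_option maxHeartbeats 2000000 in
theorem spectral_coordinates_perturbation_bound {N k : ℕ} (hk0 : 0 < k) (hkN : k < N)
    (A Atil U Util : Matrix (Fin N) (Fin N) ℝ)
    (lam tlam : Fin N → ℝ) (hlam : Antitone lam) (htlam : Antitone tlam)
    (hUorth : U * Uᵀ = 1) (hUtilorth : Util * Utilᵀ = 1)
    (hAdiag : A = U * Matrix.diagonal lam * Uᵀ)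
    (hAtildiag : Atil = Util * Matrix.diagonal tlam * Utilᵀ)
    (Vk Vtilk : Matrix (Fin N) (Fin k) ℝ)
    (hVk : Vkᵀ * Vk = 1) (hVtilk : Vtilkᵀ * Vtilk = 1)
    (hVkcols : ∀ j : Fin k,
      A.mulVec (fun i => Vk i j) = lam (Fin.castLE hkN.le j) • (fun i => Vk i j))
    (hVtilkcols : ∀ j : Fin k,
      Atil.mulVec (fun i => Vtilk i j) = tlam (Fin.castLE hkN.le j) • (fun i => Vtilk i j))
    (α : ℝ) (hα : 0 < α)
    (hgap : α ≤ lam ⟨k - 1, lt_of_le_of_lt (Nat.sub_le k 1) hkN⟩ - lam ⟨k, hkN⟩)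
    (hlamk : α ≤ lam ⟨k - 1, lt_of_le_of_lt (Nat.sub_le k 1) hkN⟩) :
    ∃ Q : Matrix (Fin k) (Fin k) ℝ, Qᵀ * Q = 1 ∧
      ∀ i : Fin N,
        eucNorm (fun j => Vtilk i j - Matrix.vecMul (fun l => Vk i l) Q j) ≤
          (1 + Real.sqrt 2) * (1 / α) * frobNorm (A - Atil) := by
  classical
  set ik : Fin N := ⟨k - 1, lt_of_le_of_lt (Nat.sub_le k 1) hkN⟩ with hik
  set ik' : Fin N := ⟨k, hkN⟩ with hik'
  have hik_le : ik ≤ ik' := by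
    simp only [hik, hik', Fin.mk_le_mk]
    omega
  -- symmetry
  have hAsymm : Aᵀ = A := by
    rw [hAdiag, Matrix.transpose_mul, Matrix.transpose_mul, Matrix.transpose_transpose,
      Matrix.diagonal_transpose, Matrix.mul_assoc]
  have hAtsymm : Atilᵀ = Atil := by
    rw [hAtildiag, Matrix.transpose_mul, Matrix.transpose_mul, Matrix.transpose_transpose,
      Matrix.diagonal_transpose, Matrix.mul_assoc]
  set E : Matrix (Fin N) (Fin N) ℝ := A - Atil with hE
  have hEsymm : Eᵀ = E := by rw [hE, Matrix.transpose_sub, hAsymm, hAtsymm]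
  set P : Matrix (Fin N) (Fin N) ℝ := Vk * Vkᵀ with hP
  set Pt : Matrix (Fin N) (Fin N) ℝ := Vtilk * Vtilkᵀ with hPt
  have hPsym : Pᵀ = P := by
    rw [hP, Matrix.transpose_mul, Matrix.transpose_transpose]
  have hPidem : P * P = P := by
    rw [hP, Matrix.mul_assoc, ← Matrix.mul_assoc Vkᵀ Vk Vkᵀ, hVk, Matrix.one_mul]
  have hPtsym : Ptᵀ = Pt := by
    rw [hPt, Matrix.transpose_mul, Matrix.transpose_transpose]
  have hPtidem : Pt * Pt = Pt := by
    rw [hPt, Matrix.mul_assoc, ← Matrix.mul_assoc Vtilkᵀ Vtilk Vtilkᵀ, hVtilk, Matrix.one_mul]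
  have h1Psym : (1 - P)ᵀ = 1 - P := by rw [Matrix.transpose_sub, Matrix.transpose_one, hPsym]
  have h1Pidem : (1 - P) * (1 - P) = 1 - P := by
    simp only [Matrix.mul_sub, Matrix.sub_mul, Matrix.one_mul, Matrix.mul_one, hPidem]
    abel
  have h1Ptsym : (1 - Pt)ᵀ = 1 - Pt := by rw [Matrix.transpose_sub, Matrix.transpose_one, hPtsym]
  have h1Ptidem : (1 - Pt) * (1 - Pt) = 1 - Pt := by
    simp only [Matrix.mul_sub, Matrix.sub_mul, Matrix.one_mul, Matrix.mul_one, hPtidem]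
    abel
  -- column eigen relations as matrix identities
  have hAVk : A * Vk = Vk * Matrix.diagonal (fun j => lam (Fin.castLE hkN.le j)) := by
    ext i j
    have h := congrFun (hVkcols j) i
    simp only [Matrix.mulVec, dotProduct, Pi.smul_apply, smul_eq_mul] at h
    rw [Matrix.mul_apply, Matrix.mul_diagonal]
    rw [h]; ring
  have hAtVt : Atil * Vtilk = Vtilk * Matrix.diagonal (fun j => tlam (Fin.castLE hkN.le j)) := by
    ext i j
    have h := congrFun (hVtilkcols j) i
    simp only [Matrix.mulVec, dotProduct, Pi.smul_apply, smul_eq_mul] at h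
    rw [Matrix.mul_apply, Matrix.mul_diagonal]
    rw [h]; ring
  -- commuting
  have hAP : A * P = P * A := by
    have h1 : (A * P)ᵀ = A * P := by
      rw [hP, ← Matrix.mul_assoc, hAVk]
      rw [Matrix.transpose_mul, Matrix.transpose_mul, Matrix.transpose_transpose,
        Matrix.diagonal_transpose, Matrix.mul_assoc]
    calc A * P = (A * P)ᵀ := h1.symm
      _ = Pᵀ * Aᵀ := Matrix.transpose_mul A P
      _ = P * A := by rw [hPsym, hAsymm]
  have hAtPt : Atil * Pt = Pt * Atil := by
    have h1 : (Atil * Pt)ᵀ = Atil * Pt := by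
      rw [hPt, ← Matrix.mul_assoc, hAtVt]
      rw [Matrix.transpose_mul, Matrix.transpose_mul, Matrix.transpose_transpose,
        Matrix.diagonal_transpose, Matrix.mul_assoc]
    calc Atil * Pt = (Atil * Pt)ᵀ := h1.symm
      _ = Ptᵀ * Atilᵀ := Matrix.transpose_mul Atil Pt
      _ = Pt * Atil := by rw [hPtsym, hAtsymm]
  -- residual matrices
  set M : Matrix (Fin k) (Fin k) ℝ := Vkᵀ * Vtilk with hM
  set Zc : Matrix (Fin N) (Fin k) ℝ := Vtilk - P * Vtilk with hZc
  set Zc' : Matrix (Fin N) (Fin k) ℝ := Vk - Pt * Vk with hZc'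
  set Yc : Matrix (Fin N) (Fin k) ℝ := (1 - P) * E * Vtilk with hYc
  set Yc' : Matrix (Fin N) (Fin k) ℝ := (1 - Pt) * (Atil - A) * Vk with hYc'
  have hZc1 : Zc = (1 - P) * Vtilk := by
    rw [hZc, Matrix.sub_mul, Matrix.one_mul]
  have hZc1' : Zc' = (1 - Pt) * Vk := by
    rw [hZc', Matrix.sub_mul, Matrix.one_mul]
  set d1 : ℝ := tlam ik - lam ik' with hd1def
  set d2 : ℝ := lam ik - tlam ik' with hd2def
  -- the matrix identity behind estimate 1
  have hcolid : A * Zc - Zc * Matrix.diagonal (fun j => tlam (Fin.castLE hkN.le j)) = Yc := by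
    rw [hZc1, hYc]
    have hA1P : A * (1 - P) = (1 - P) * A := by
      rw [Matrix.mul_sub, Matrix.sub_mul, Matrix.mul_one, Matrix.one_mul, hAP]
    calc A * ((1 - P) * Vtilk) - (1 - P) * Vtilk * Matrix.diagonal (fun j => tlam (Fin.castLE hkN.le j))
        = (A * (1 - P)) * Vtilk - (1 - P) * (Vtilk * Matrix.diagonal (fun j => tlam (Fin.castLE hkN.le j))) := by
          simp only [Matrix.mul_assoc]
      _ = (1 - P) * (A * Vtilk) - (1 - P) * (Atil * Vtilk) := by
          rw [hA1P, hAtVt, Matrix.mul_assoc]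
      _ = (1 - P) * E * Vtilk := by
          rw [← Matrix.mul_sub, ← Matrix.sub_mul, ← hE, ← Matrix.mul_assoc]
  have hcolid' : Atil * Zc' - Zc' * Matrix.diagonal (fun j => lam (Fin.castLE hkN.le j)) = Yc' := by
    rw [hZc1', hYc']
    have hA1Pt : Atil * (1 - Pt) = (1 - Pt) * Atil := by
      rw [Matrix.mul_sub, Matrix.sub_mul, Matrix.mul_one, Matrix.one_mul, hAtPt]
    calc Atil * ((1 - Pt) * Vk) - (1 - Pt) * Vk * Matrix.diagonal (fun j => lam (Fin.castLE hkN.le j))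
        = (Atil * (1 - Pt)) * Vk - (1 - Pt) * (Vk * Matrix.diagonal (fun j => lam (Fin.castLE hkN.le j))) := by
          simp only [Matrix.mul_assoc]
      _ = (1 - Pt) * (Atil * Vk) - (1 - Pt) * (A * Vk) := by
          rw [hA1Pt, hAVk, Matrix.mul_assoc]
      _ = (1 - Pt) * (Atil - A) * Vk := by
          rw [← Matrix.mul_sub, ← Matrix.sub_mul, ← Matrix.mul_assoc]
  -- orthogonality of residual columns
  have hVZ : Vkᵀ * Zc = 0 := by
    rw [hZc, Matrix.mul_sub, hP]
    rw [show Vkᵀ * (Vk * Vkᵀ * Vtilk) = (Vkᵀ * Vk) * (Vkᵀ * Vtilk) by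
      simp only [Matrix.mul_assoc]]
    rw [hVk, Matrix.one_mul, sub_self]
  have hVZ' : Vtilkᵀ * Zc' = 0 := by
    rw [hZc', Matrix.mul_sub, hPt]
    rw [show Vtilkᵀ * (Vtilk * Vtilkᵀ * Vk) = (Vtilkᵀ * Vtilk) * (Vtilkᵀ * Vk) by
      simp only [Matrix.mul_assoc]]
    rw [hVtilk, Matrix.one_mul, sub_self]
  -- the two eigenvalue estimates
  have est1 : 0 ≤ d1 → d1 ^ 2 * frobSq Zc ≤ frobSq Yc := by
    intro hd1
    rw [frobSq_col_sum Zc, frobSq_col_sum Yc, Finset.mul_sum]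
    refine Finset.sum_le_sum fun j _ => ?_
    have hzj : ∀ j' : Fin k, (fun i => Vk i j') ⬝ᵥ (fun i => Zc i j) = 0 := by
      intro j'
      have := congrFun (congrFun hVZ j') j
      simpa [Matrix.mul_apply, dotProduct] using this
    have hμ1 : lam ⟨k, hkN⟩ + d1 ≤ tlam (Fin.castLE hkN.le j) := by
      have hjik : Fin.castLE hkN.le j ≤ ik := by
        simp only [hik, Fin.le_def, Fin.coe_castLE]
        omega
      have := htlam hjik
      simp only [hd1def, hik']
      linarith
    have h := est hkN A U lam hlam hUorth hAdiag Vk hVk hVkcols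
      (fun i => Zc i j) hzj (tlam (Fin.castLE hkN.le j)) d1 hd1 hμ1
    have hcol : (A *ᵥ (fun i => Zc i j) - tlam (Fin.castLE hkN.le j) • (fun i => Zc i j))
        = fun i => Yc i j := by
      funext i
      have h0 := congrFun (congrFun hcolid i) j
      simp only [Matrix.sub_apply, Matrix.mul_diagonal] at h0
      simp only [Pi.sub_apply, Pi.smul_apply, smul_eq_mul, Matrix.mulVec, dotProduct]
      rw [← h0, Matrix.mul_apply]
      ring
    rw [hcol] at h
    exact h
  have est2 : 0 ≤ d2 → d2 ^ 2 * frobSq Zc' ≤ frobSq Yc' := by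
    intro hd2
    rw [frobSq_col_sum Zc', frobSq_col_sum Yc', Finset.mul_sum]
    refine Finset.sum_le_sum fun j _ => ?_
    have hzj : ∀ j' : Fin k, (fun i => Vtilk i j') ⬝ᵥ (fun i => Zc' i j) = 0 := by
      intro j'
      have := congrFun (congrFun hVZ' j') j
      simpa [Matrix.mul_apply, dotProduct] using this
    have hμ2 : tlam ⟨k, hkN⟩ + d2 ≤ lam (Fin.castLE hkN.le j) := by
      have hjik : Fin.castLE hkN.le j ≤ ik := by
        simp only [hik, Fin.le_def, Fin.coe_castLE]
        omega
      have := hlam hjik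
      simp only [hd2def, hik']
      linarith
    have h := est hkN Atil Util tlam htlam hUtilorth hAtildiag Vtilk hVtilk hVtilkcols
      (fun i => Zc' i j) hzj (lam (Fin.castLE hkN.le j)) d2 hd2 hμ2
    have hcol : (Atil *ᵥ (fun i => Zc' i j) - lam (Fin.castLE hkN.le j) • (fun i => Zc' i j))
        = fun i => Yc' i j := by
      funext i
      have h0 := congrFun (congrFun hcolid' i) j
      simp only [Matrix.sub_apply, Matrix.mul_diagonal] at h0
      simp only [Pi.sub_apply, Pi.smul_apply, smul_eq_mul, Matrix.mulVec, dotProduct]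
      rw [← h0, Matrix.mul_apply]
      ring
    rw [hcol] at h
    exact h
  -- equality of the two residual masses
  have hw2 : frobSq Zc = (k : ℝ) - (Mᵀ * M).trace := by
    rw [frobSq_eq_trace]
    have hexp : Zcᵀ * Zc = 1 - Mᵀ * M := by
      rw [hZc1]
      rw [Matrix.transpose_mul, h1Psym]
      rw [show Vtilkᵀ * (1 - P) * ((1 - P) * Vtilk) = Vtilkᵀ * ((1 - P) * (1 - P)) * Vtilk by
        simp only [Matrix.mul_assoc]]
      rw [h1Pidem, Matrix.mul_sub, Matrix.mul_one, Matrix.sub_mul, hVtilk]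
      congr 1
      rw [hP, hM, Matrix.transpose_mul, Matrix.transpose_transpose]
      simp only [Matrix.mul_assoc]
    rw [hexp, Matrix.trace_sub, Matrix.trace_one]
    simp
  have hx2 : frobSq Zc' = (k : ℝ) - (Mᵀ * M).trace := by
    rw [frobSq_eq_trace]
    have hexp : Zc'ᵀ * Zc' = 1 - M * Mᵀ := by
      rw [hZc1']
      rw [Matrix.transpose_mul, h1Ptsym]
      rw [show Vkᵀ * (1 - Pt) * ((1 - Pt) * Vk) = Vkᵀ * ((1 - Pt) * (1 - Pt)) * Vk by
        simp only [Matrix.mul_assoc]]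
      rw [h1Ptidem, Matrix.mul_sub, Matrix.mul_one, Matrix.sub_mul, hVk]
      congr 1
      rw [hPt, hM, Matrix.transpose_mul, Matrix.transpose_transpose]
      simp only [Matrix.mul_assoc]
    rw [hexp, Matrix.trace_sub, Matrix.trace_one, Matrix.trace_mul_comm]
    simp
  have hZZ : frobSq Zc = frobSq Zc' := by rw [hw2, hx2]
  -- the energy budget
  have hbudget : frobSq Yc + frobSq Yc' ≤ frobSq E := by
    have hYc1 : frobSq Yc ≤ frobSq ((1 - P) * E) := by
      have hiso := frobSq_mul_isometry ((1 - P) * E) Vtilk hVtilk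
      rw [hYc, hiso, ← hPt]
      exact frobSq_mul_right_proj_le ((1 - P) * E) Pt hPtsym hPtidem
    have hYc2 : frobSq Yc' ≤ frobSq (P * E) := by
      have hneg : Yc' = -((1 - Pt) * E * Vk) := by
        rw [hYc', hE]
        rw [show Atil - A = -(A - Atil) by abel]
        simp only [Matrix.mul_neg, Matrix.neg_mul]
      rw [hneg, frobSq_neg]
      have hiso := frobSq_mul_isometry ((1 - Pt) * E) Vk hVk
      rw [hiso, ← hP]
      have htrans : frobSq ((1 - Pt) * E * P) = frobSq (P * E * (1 - Pt)) := by
        rw [← frobSq_transpose (P * E * (1 - Pt))]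
        congr 1
        rw [Matrix.transpose_mul, Matrix.transpose_mul, h1Ptsym, hEsymm, hPsym,
          Matrix.mul_assoc]
      rw [htrans]
      exact frobSq_mul_right_proj_le (P * E) (1 - Pt) h1Ptsym h1Ptidem
    have hsplit := frobSq_split_left E P hPsym hPidem
    have h1PE : (1 - P) * E = E - P * E := by
      rw [Matrix.sub_mul, Matrix.one_mul]
    rw [h1PE] at hYc1
    linarith
  -- the key inequality : α² · w² ≤ 2 ‖E‖²
  have hZcpos : 0 ≤ frobSq Zc := frobSq_nonneg Zc
  have htlamlele : tlam ik' ≤ tlam ik := htlam hik_le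
  have hEpos : 0 ≤ frobSq E := frobSq_nonneg E
  have key : α ^ 2 * frobSq Zc ≤ 2 * frobSq E := by
    have hYcE : frobSq Yc ≤ frobSq E := by
      have := frobSq_nonneg Yc'
      linarith
    have hYcE' : frobSq Yc' ≤ frobSq E := by
      have := frobSq_nonneg Yc
      linarith
    rcases le_or_gt d1 0 with hd1 | hd1
    · -- then α ≤ d2
      have hαd2 : α ≤ d2 := by
        simp only [hd1def] at hd1
        simp only [hd2def]
        linarith
      have h2 := est2 (le_trans hα.le hαd2)
      rw [← hZZ] at h2
      have : α ^ 2 * frobSq Zc ≤ d2 ^ 2 * frobSq Zc := by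
        apply mul_le_mul_of_nonneg_right _ hZcpos
        have h0 : (0:ℝ) ≤ α := hα.le
        nlinarith
      linarith
    rcases le_or_gt d2 0 with hd2 | hd2
    · have hαd1 : α ≤ d1 := by
        simp only [hd2def] at hd2
        simp only [hd1def]
        linarith
      have h1 := est1 (le_trans hα.le hαd1)
      have : α ^ 2 * frobSq Zc ≤ d1 ^ 2 * frobSq Zc := by
        apply mul_le_mul_of_nonneg_right _ hZcpos
        have h0 : (0:ℝ) ≤ α := hα.le
        nlinarith
      linarith
    · have h1 := est1 hd1.le
      have h2 := est2 hd2.le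
      rw [← hZZ] at h2
      have hsum : α ≤ d1 + d2 := by
        simp only [hd1def, hd2def]
        linarith
      have hsq : α ^ 2 ≤ 2 * (d1 ^ 2 + d2 ^ 2) := by
        nlinarith [hsum, hα.le, sq_nonneg (d1 - d2), sq_nonneg (d1 + d2)]
      nlinarith
  -- Procrustes step
  have hMcontract : ∀ x : Fin k → ℝ, (M *ᵥ x) ⬝ᵥ (M *ᵥ x) ≤ x ⬝ᵥ x := by
    intro x
    have hMx : M *ᵥ x = Vkᵀ *ᵥ (Vtilk *ᵥ x) := by
      rw [hM, ← Matrix.mulVec_mulVec]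
    have hVt : (Vtilk *ᵥ x) ⬝ᵥ (Vtilk *ᵥ x) = x ⬝ᵥ x := by
      rw [dot_mulVec_left, Matrix.mulVec_mulVec, hVtilk, Matrix.one_mulVec]
    set y : Fin N → ℝ := Vtilk *ᵥ x with hy
    have hstep : (Vkᵀ *ᵥ y) ⬝ᵥ (Vkᵀ *ᵥ y) ≤ y ⬝ᵥ y := by
      have h1 : (Vkᵀ *ᵥ y) ⬝ᵥ (Vkᵀ *ᵥ y) = y ⬝ᵥ (P *ᵥ y) := by
        rw [dot_mulVec_left, Matrix.transpose_transpose, Matrix.mulVec_mulVec, ← hP]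
      have h2 : (P *ᵥ y) ⬝ᵥ (P *ᵥ y) = y ⬝ᵥ (P *ᵥ y) := by
        rw [dot_mulVec_left, hPsym, Matrix.mulVec_mulVec, hPidem]
      have hcs := Finset.sum_mul_sq_le_sq_mul_sq Finset.univ y (P *ᵥ y)
      have hyy : 0 ≤ y ⬝ᵥ y := Finset.sum_nonneg fun i _ => mul_self_nonneg _
      have hPyPy : 0 ≤ y ⬝ᵥ (P *ᵥ y) := by
        rw [← h2]
        exact Finset.sum_nonneg fun i _ => mul_self_nonneg _
      rw [h1]
      -- from CS : (y ⬝ᵥ Pᵥ y)^2 ≤ (y⬝ᵥy) * (Pᵥy ⬝ᵥ Pᵥy) = (y⬝ᵥy) * (y ⬝ᵥ Pᵥ y)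
      have hcs' : (y ⬝ᵥ (P *ᵥ y)) ^ 2 ≤ (y ⬝ᵥ y) * (y ⬝ᵥ (P *ᵥ y)) := by
        have hdot1 : y ⬝ᵥ (P *ᵥ y) = ∑ i, y i * (P *ᵥ y) i := rfl
        have hdot2 : y ⬝ᵥ y = ∑ i, y i ^ 2 := by
          simp [dotProduct, pow_two]
        have hdot3 : (P *ᵥ y) ⬝ᵥ (P *ᵥ y) = ∑ i, (P *ᵥ y) i ^ 2 := by
          simp [dotProduct, pow_two]
        calc (y ⬝ᵥ (P *ᵥ y)) ^ 2 = (∑ i, y i * (P *ᵥ y) i) ^ 2 := by rw [hdot1]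
          _ ≤ (∑ i, y i ^ 2) * (∑ i, (P *ᵥ y) i ^ 2) := hcs
          _ = (y ⬝ᵥ y) * ((P *ᵥ y) ⬝ᵥ (P *ᵥ y)) := by rw [hdot2, hdot3]
          _ = (y ⬝ᵥ y) * (y ⬝ᵥ (P *ᵥ y)) := by rw [h2]
      nlinarith
    rw [hMx]
    exact le_of_le_of_eq hstep hVt
  obtain ⟨Q, hQorth, hQtr⟩ := procrustes M hMcontract
  refine ⟨Q, hQorth, ?_⟩
  intro i
  -- the difference matrix
  set D : Matrix (Fin N) (Fin k) ℝ := Vtilk - Vk * Q with hD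
  have hfrobD : frobSq D = 2 * ((k : ℝ) - (Qᵀ * M).trace) := by
    rw [frobSq_eq_trace]
    have hexp : Dᵀ * D = 1 - Mᵀ * Q - Qᵀ * M + Qᵀ * Q := by
      rw [hD, Matrix.transpose_sub, Matrix.transpose_mul]
      rw [Matrix.sub_mul, Matrix.mul_sub, Matrix.mul_sub, hVtilk]
      rw [show Qᵀ * Vkᵀ * Vtilk = Qᵀ * (Vkᵀ * Vtilk) by simp only [Matrix.mul_assoc]]
      rw [show Qᵀ * Vkᵀ * (Vk * Q) = Qᵀ * ((Vkᵀ * Vk) * Q) by simp only [Matrix.mul_assoc]]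
      rw [hVk, Matrix.one_mul, ← hM]
      rw [show Vtilkᵀ * (Vk * Q) = (Vtilkᵀ * Vk) * Q by simp only [Matrix.mul_assoc]]
      rw [show Vtilkᵀ * Vk = Mᵀ by rw [hM, Matrix.transpose_mul, Matrix.transpose_transpose]]
      abel
    rw [hexp]
    rw [Matrix.trace_add, Matrix.trace_sub, Matrix.trace_sub, Matrix.trace_one, hQorth,
      Matrix.trace_one]
    have : (Mᵀ * Q).trace = (Qᵀ * M).trace := by
      rw [← Matrix.trace_transpose (Mᵀ * Q), Matrix.transpose_mul, Matrix.transpose_transpose]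
    rw [this]
    simp
    ring
  have hfrobD2 : frobSq D ≤ 2 * frobSq Zc := by
    rw [hfrobD, hw2]
    have := hQtr
    linarith
  -- final numeric assembly
  have hDE : α ^ 2 * frobSq D ≤ 4 * frobSq E := by nlinarith [frobSq_nonneg D]
  have hrow : (∑ j, (D i j) ^ 2) ≤ frobSq D := by
    unfold frobSq
    exact Finset.single_le_sum (f := fun i' => ∑ j, (D i' j) ^ 2)
      (fun i' _ => Finset.sum_nonneg fun j _ => sq_nonneg _) (Finset.mem_univ i)
  have hgoalfun : (fun j => Vtilk i j - Matrix.vecMul (fun l => Vk i l) Q j)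
      = fun j => D i j := by
    funext j
    rw [hD]
    simp [Matrix.vecMul, Matrix.sub_apply, Matrix.mul_apply, dotProduct]
  rw [hgoalfun]
  have hfrobE : frobNorm (A - Atil) = Real.sqrt (frobSq E) := by
    rw [hE]; rfl
  rw [hfrobE]
  unfold eucNorm
  have hs1 : Real.sqrt (∑ j, (D i j) ^ 2) ≤ Real.sqrt (frobSq D) := Real.sqrt_le_sqrt hrow
  have hs2 : Real.sqrt (frobSq D) ≤ 2 * (1 / α) * Real.sqrt (frobSq E) := by
    have h4 : frobSq D ≤ (2 * (1 / α)) ^ 2 * frobSq E := by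
      rw [mul_pow, div_pow]
      rw [show (2:ℝ)^2 * (1^2 / α^2) * frobSq E = (4 * frobSq E) / α ^ 2 by ring]
      rw [le_div_iff₀ (by positivity)]
      nlinarith
    calc Real.sqrt (frobSq D) ≤ Real.sqrt ((2 * (1 / α)) ^ 2 * frobSq E) := Real.sqrt_le_sqrt h4
      _ = 2 * (1 / α) * Real.sqrt (frobSq E) := by
          rw [Real.sqrt_mul (sq_nonneg _), Real.sqrt_sq (by positivity)]
  have hs3 : 2 * (1 / α) * Real.sqrt (frobSq E)
      ≤ (1 + Real.sqrt 2) * (1 / α) * Real.sqrt (frobSq E) := by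
    have h12 : (2:ℝ) ≤ 1 + Real.sqrt 2 := by
      nlinarith [Real.sq_sqrt (by norm_num : (2:ℝ) ≥ 0), Real.sqrt_nonneg 2,
        Real.sqrt_le_sqrt (by norm_num : (1:ℝ) ≤ 2), Real.sqrt_one]
    apply mul_le_mul_of_nonneg_right _ (Real.sqrt_nonneg _)
    apply mul_le_mul_of_nonneg_right h12 (by positivity)
  linarith
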